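/- Completeness of DAL (Segerberg): for every set Φ of DAL formulas and every DAL formula φ, if φ is an algebraic consequence of Φ (Φ ⊨ φ), then φ is provable from Φ in the Hilbert system for DAL (Φ ⊢ φ). -/

import Mathlib

namespace DAL

/-- Actions of DAL over a countable set of basic action symbols. -/
inductive Act : Type where
  | basic : ℕ → Act
  | join : Act → Act → Act
  | meet : Act → Act → Act
  | compl : Act → Act
  | zero : Act
  | one : Act

/-- Formulas of DAL. -/
inductive Fml : Type where
  | neg : Fml → Fml
  | or : Fml → Fml → Fml
  | eq : Act → Act → Fml
  | perm : Act → Fml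
  | forb : Act → Fml

/-- Material implication, defined from ¬ and ∨. -/
def fImp (p q : Fml) : Fml := .or (.neg p) q
/-- Conjunction, defined from ¬ and ∨. -/
def fAnd (p q : Fml) : Fml := .neg (.or (.neg p) (.neg q))
/-- Biconditional. -/
def fIff (p q : Fml) : Fml := fAnd (fImp p q) (fImp q p)
/-- Verum. -/
def fTop : Fml := .or (.eq .zero .zero) (.neg (.eq .zero .zero))
/-- Falsum. -/
def fBot : Fml := .neg fTop

/-- `ARepl a b γ γ'` : γ' is obtained from γ by replacing some (possibly zero)
occurrences of the action `a` with the action `b`. -/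
inductive ARepl (a b : Act) : Act → Act → Prop where
  | repl : ARepl a b a b
  | basic (n : ℕ) : ARepl a b (.basic n) (.basic n)
  | zero : ARepl a b .zero .zero
  | one : ARepl a b .one .one
  | join {x x' y y'} : ARepl a b x x' → ARepl a b y y' → ARepl a b (.join x y) (.join x' y')
  | meet {x x' y y'} : ARepl a b x x' → ARepl a b y y' → ARepl a b (.meet x y) (.meet x' y')
  | compl {x x'} : ARepl a b x x' → ARepl a b (.compl x) (.compl x')

/-- `FRepl a b φ φ'` : φ' is obtained from φ by replacing some (possibly zero)
occurrences of the action `a` with the action `b`. -/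
inductive FRepl (a b : Act) : Fml → Fml → Prop where
  | neg {p p'} : FRepl a b p p' → FRepl a b (.neg p) (.neg p')
  | or {p p' q q'} : FRepl a b p p' → FRepl a b q q' → FRepl a b (.or p q) (.or p' q')
  | eq {x x' y y'} : ARepl a b x x' → ARepl a b y y' → FRepl a b (.eq x y) (.eq x' y')
  | perm {x x'} : ARepl a b x x' → FRepl a b (.perm x) (.perm x')
  | forb {x x'} : ARepl a b x x' → FRepl a b (.forb x) (.forb x')

/-- The axioms of the Hilbert system for DAL: a complete classical axiomatization of
¬, ∨; Boolean algebra axioms for actions plus ¬(0=1); equality and substitution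
axioms; and the deontic axioms D1, D2, D3. -/
inductive Ax : Fml → Prop where
  -- classical axioms for ¬ and ∨ (Principia Mathematica style)
  | pl1 (p : Fml) : Ax (fImp (.or p p) p)
  | pl2 (p q : Fml) : Ax (fImp p (.or p q))
  | pl3 (p q : Fml) : Ax (fImp (.or p q) (.or q p))
  | pl4 (p q r : Fml) : Ax (fImp (fImp p q) (fImp (.or r p) (.or r q)))
  -- Boolean algebra axioms for actions
  | joinComm (x y : Act) : Ax (.eq (.join x y) (.join y x))
  | meetComm (x y : Act) : Ax (.eq (.meet x y) (.meet y x))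
  | joinAssoc (x y z : Act) : Ax (.eq (.join x (.join y z)) (.join (.join x y) z))
  | meetAssoc (x y z : Act) : Ax (.eq (.meet x (.meet y z)) (.meet (.meet x y) z))
  | joinDistrib (x y z : Act) : Ax (.eq (.join x (.meet y z)) (.meet (.join x y) (.join x z)))
  | meetDistrib (x y z : Act) : Ax (.eq (.meet x (.join y z)) (.join (.meet x y) (.meet x z)))
  | joinZero (x : Act) : Ax (.eq (.join x .zero) x)
  | meetOne (x : Act) : Ax (.eq (.meet x .one) x)
  | joinCompl (x : Act) : Ax (.eq (.join x (.compl x)) .one)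
  | meetCompl (x : Act) : Ax (.eq (.meet x (.compl x)) .zero)
  | nondeg : Ax (.neg (.eq .zero .one))
  -- equality axioms
  | eqRefl (x : Act) : Ax (.eq x x)
  | eqSymm (x y : Act) : Ax (fImp (.eq x y) (.eq y x))
  | eqTrans (x y z : Act) : Ax (fImp (.eq x y) (fImp (.eq y z) (.eq x z)))
  -- substitution axiom
  | subst {x y : Act} {p q : Fml} : FRepl x y p q → Ax (fImp (.eq x y) (fImp p q))
  -- deontic axioms
  | d1 (x y : Act) : Ax (fIff (.perm (.join x y)) (fAnd (.perm x) (.perm y)))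
  | d2 (x y : Act) : Ax (fIff (.forb (.join x y)) (fAnd (.forb x) (.forb y)))
  | d3 (x : Act) : Ax (fIff (.eq x .zero) (fAnd (.perm x) (.forb x)))

/-- `IsProof Φ s` : the finite sequence (list) `s` is a proof from `Φ`: every member
is an axiom, a member of `Φ`, or follows from two earlier members by modus ponens. -/
def IsProof (Φ : Set Fml) (s : List Fml) : Prop :=
  ∀ (k : ℕ) (hk : k < s.length),
    Ax (s[k]'hk) ∨ (s[k]'hk) ∈ Φ ∨
      ∃ (i j : ℕ) (hi : i < k) (hj : j < k),
        s[j]'(Nat.lt_trans hj hk) = fImp (s[i]'(Nat.lt_trans hi hk)) (s[k]'hk)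

/-- `Prov Φ φ` (Φ ⊢ φ) : there is a proof of φ from Φ. -/
def Prov (Φ : Set Fml) (φ : Fml) : Prop :=
  ∃ s : List Fml, IsProof Φ s ∧ s.getLast? = some φ

/-- Φ is ⊢-consistent. -/
def Consistent (Φ : Set Fml) : Prop := ¬ Prov Φ fBot

/-- Deductive closure. -/
def Cn (Ψ : Set Fml) : Set Fml := {φ | Prov Ψ φ}

end DAL

namespace DAL

/-- An ideal of a Boolean algebra: closed under + (⊔) and under · (⊓) with
arbitrary elements. -/
def IsIdeal {E : Type*} [BooleanAlgebra E] (I : Set E) : Prop :=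
  (∀ x ∈ I, ∀ y ∈ I, x ⊔ y ∈ I) ∧ (∀ x ∈ I, ∀ a : E, x ⊓ a ∈ I)

/-- Homomorphic extension of a valuation of basic actions to all actions. -/
def evalAct {E : Type*} [BooleanAlgebra E] (I : ℕ → E) : Act → E
  | .basic n => I n
  | .join a b => evalAct I a ⊔ evalAct I b
  | .meet a b => evalAct I a ⊓ evalAct I b
  | .compl a => (evalAct I a)ᶜ
  | .zero => ⊥
  | .one => ⊤

/-- Satisfaction of a formula in a deontic action algebra ⟨E, P, F⟩ under a
valuation `I`. -/
def Sat {E : Type*} [BooleanAlgebra E] (P F : Set E) (I : ℕ → E) : Fml → Prop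
  | .neg φ => ¬ Sat P F I φ
  | .or φ ψ => Sat P F I φ ∨ Sat P F I ψ
  | .eq a b => evalAct I a = evalAct I b
  | .perm a => evalAct I a ∈ P
  | .forb a => evalAct I a ∈ F

/-- Algebraic consequence (Φ ⊨ φ): every deontic action algebra (nondegenerate
Boolean algebra `E` with ideals `P`, `F` such that P ∩ F = {0}) and valuation
satisfying all formulas of Φ also satisfies φ. -/
def ACons (Φ : Set Fml) (φ : Fml) : Prop :=
  ∀ (E : Type) [BooleanAlgebra E] [Nontrivial E] (P F : Set E) (I : ℕ → E),
    IsIdeal P → IsIdeal F → P ∩ F = {⊥} →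
    (∀ ψ ∈ Φ, Sat P F I ψ) → Sat P F I φ

end DAL

namespace DAL

/-- Inductive derivability. -/
inductive Der (Φ : Set Fml) : Fml → Prop
  | ax {φ} : Ax φ → Der Φ φ
  | hyp {φ} : φ ∈ Φ → Der Φ φ
  | mp {p q} : Der Φ (fImp p q) → Der Φ p → Der Φ q

theorem isProof_append {Φ : Set Fml} {s t : List Fml} (hs : IsProof Φ s)
    (ht : IsProof Φ t) : IsProof Φ (s ++ t) := by
  intro k hk
  rcases Nat.lt_or_ge k s.length with h | h
  · have e : (s ++ t)[k]'hk = s[k]'h := List.getElem_append_left h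
    rw [e]
    rcases hs k h with h1 | h1 | ⟨i, j, hi, hj, hij⟩
    · exact Or.inl h1
    · exact Or.inr (Or.inl h1)
    · refine Or.inr (Or.inr ⟨i, j, hi, hj, ?_⟩)
      rw [List.getElem_append_left (Nat.lt_trans hj h),
        List.getElem_append_left (Nat.lt_trans hi h)]
      exact hij
  · have hk' : k - s.length < t.length := by
      have := hk; simp [List.length_append] at this; omega
    have e : (s ++ t)[k]'hk = t[k - s.length]'hk' := List.getElem_append_right h
    rw [e]
    rcases ht _ hk' with h1 | h1 | ⟨i, j, hi, hj, hij⟩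
    · exact Or.inl h1
    · exact Or.inr (Or.inl h1)
    · refine Or.inr (Or.inr ⟨s.length + i, s.length + j, by omega, by omega, ?_⟩)
      have ei : (s ++ t)[s.length + i]'(by simp; omega) = t[i]'(Nat.lt_trans hi hk') := by
        rw [List.getElem_append_right (by omega)]
        congr 1; omega
      have ej : (s ++ t)[s.length + j]'(by simp; omega) = t[j]'(Nat.lt_trans hj hk') := by
        rw [List.getElem_append_right (by omega)]
        congr 1; omega
      rw [ei, ej]
      convert hij using 3 <;> omega

theorem isProof_snoc {Φ : Set Fml} {u : List Fml} (hu : IsProof Φ u) {q : Fml}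
    (h : Ax q ∨ q ∈ Φ ∨ ∃ (i j : ℕ) (hi : i < u.length) (hj : j < u.length),
      u[j]'hj = fImp (u[i]'hi) q) : IsProof Φ (u ++ [q]) := by
  intro k hk
  rcases Nat.lt_or_ge k u.length with hlt | hge
  · have e : (u ++ [q])[k]'hk = u[k]'hlt := List.getElem_append_left hlt
    rw [e]
    rcases hu k hlt with h1 | h1 | ⟨i, j, hi, hj, hij⟩
    · exact Or.inl h1
    · exact Or.inr (Or.inl h1)
    · refine Or.inr (Or.inr ⟨i, j, hi, hj, ?_⟩)
      rw [List.getElem_append_left (Nat.lt_trans hj hlt),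
        List.getElem_append_left (Nat.lt_trans hi hlt)]
      exact hij
  · have hke : k = u.length := by simp at hk; omega
    have e : (u ++ [q])[k]'hk = q := by
      rw [List.getElem_append_right hge]
      simp [hke]
    rw [e]
    rcases h with h1 | h1 | ⟨i, j, hi, hj, hij⟩
    · exact Or.inl h1
    · exact Or.inr (Or.inl h1)
    · refine Or.inr (Or.inr ⟨i, j, by omega, by omega, ?_⟩)
      rw [List.getElem_append_left (show j < u.length from hj),
        List.getElem_append_left (show i < u.length from hi)]
      exact hij

theorem getLast?_spec {s : List Fml} {φ : Fml} (h : s.getLast? = some φ) :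
    ∃ h1 : 0 < s.length, s[s.length - 1]'(by omega) = φ := by
  cases s with
  | nil => simp at h
  | cons a l =>
    refine ⟨by simp, ?_⟩
    rw [List.getLast?_eq_getLast (l := a :: l) (List.cons_ne_nil a l)] at h
    rw [← List.getLast_eq_getElem (List.cons_ne_nil a l)]
    exact Option.some_injective _ h

theorem prov_of_der {Φ : Set Fml} {φ : Fml} (h : Der Φ φ) : Prov Φ φ := by
  induction h with
  | @ax ψ h =>
    refine ⟨[ψ], ?_, rfl⟩
    intro k hk
    have : k = 0 := by simp at hk; omega
    subst this
    exact Or.inl h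
  | @hyp ψ h =>
    refine ⟨[ψ], ?_, rfl⟩
    intro k hk
    have : k = 0 := by simp at hk; omega
    subst this
    exact Or.inr (Or.inl h)
  | @mp p q _ _ ih1 ih2 =>
    obtain ⟨s, hs, hls⟩ := ih1
    obtain ⟨t, ht, hlt⟩ := ih2
    obtain ⟨hs0, hsl⟩ := getLast?_spec hls
    obtain ⟨ht0, htl⟩ := getLast?_spec hlt
    refine ⟨(s ++ t) ++ [q], ?_, by simp⟩
    refine isProof_snoc (isProof_append hs ht) (Or.inr (Or.inr
      ⟨s.length + t.length - 1, s.length - 1, by simp; omega, by simp; omega, ?_⟩))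
    have e2 : (s ++ t)[s.length + t.length - 1]'(by simp; omega)
        = t[t.length - 1]'(by omega) := by
      rw [List.getElem_append_right (by omega)]
      congr 1
      omega
    have e3 : (s ++ t)[s.length - 1]'(by simp; omega) = s[s.length - 1]'(by omega) :=
      List.getElem_append_left (by omega)
    rw [e2, e3, htl, hsl]

theorem der_of_isProof {Φ : Set Fml} {s : List Fml} (hs : IsProof Φ s) :
    ∀ (k : ℕ) (hk : k < s.length), Der Φ (s[k]'hk) := by
  intro k
  induction k using Nat.strong_induction_on with
  | _ k ih =>
    intro hk
    rcases hs k hk with h | h | ⟨i, j, hi, hj, hij⟩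
    · exact Der.ax h
    · exact Der.hyp h
    · exact Der.mp (hij ▸ ih j hj (Nat.lt_trans hj hk)) (ih i hi (Nat.lt_trans hi hk))

theorem der_of_prov {Φ : Set Fml} {φ : Fml} (h : Prov Φ φ) : Der Φ φ := by
  obtain ⟨s, hs, hls⟩ := h
  obtain ⟨h0, hl⟩ := getLast?_spec hls
  exact hl ▸ der_of_isProof hs _ _

theorem prov_iff_der {Φ : Set Fml} {φ : Fml} : Prov Φ φ ↔ Der Φ φ :=
  ⟨der_of_prov, prov_of_der⟩


namespace Der

variable {Φ : Set Fml} {p q r χ ψ φ : Fml}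

theorem mono {Ψ : Set Fml} (h : Φ ⊆ Ψ) (hd : Der Φ φ) : Der Ψ φ := by
  induction hd with
  | ax h1 => exact .ax h1
  | hyp h1 => exact .hyp (h h1)
  | mp _ _ ih1 ih2 => exact .mp ih1 ih2

/-- hypothetical syllogism, object level: `(q→r) → ((p→q)→(p→r))`. -/
theorem hsAx : Der Φ (fImp (fImp q r) (fImp (fImp p q) (fImp p r))) :=
  .ax (Ax.pl4 q r (.neg p))

/-- hypothetical syllogism rule. -/
theorem hs (h1 : Der Φ (fImp p q)) (h2 : Der Φ (fImp q r)) : Der Φ (fImp p r) :=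
  .mp (.mp hsAx h2) h1

theorem orInl : Der Φ (fImp p (.or p q)) := .ax (Ax.pl2 p q)

theorem orInr : Der Φ (fImp q (.or p q)) :=
  hs (.ax (Ax.pl2 q p)) (.ax (Ax.pl3 q p))

theorem impSelf : Der Φ (fImp p p) :=
  hs (.ax (Ax.pl2 p p)) (.ax (Ax.pl1 p))

/-- excluded middle `p ∨ ¬p`. -/
theorem em : Der Φ (.or p (.neg p)) :=
  .mp (.ax (Ax.pl3 (.neg p) p)) impSelf

/-- `p → ¬¬p`. -/
theorem dni : Der Φ (fImp p (.neg (.neg p))) := em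

/-- from `a→b` infer `(c∨a)→(c∨b)`. -/
theorem orMonoR (h : Der Φ (fImp p q)) : Der Φ (fImp (.or r p) (.or r q)) :=
  .mp (.ax (Ax.pl4 p q r)) h

theorem orElim (h1 : Der Φ (fImp p r)) (h2 : Der Φ (fImp q r)) :
    Der Φ (fImp (.or p q) r) :=
  hs (orMonoR h2) (hs (.ax (Ax.pl3 p r)) (hs (orMonoR h1) (.ax (Ax.pl1 r))))

/-- `¬¬p → p`. -/
theorem dne : Der Φ (fImp (.neg (.neg p)) p) :=
  .mp (.ax (Ax.pl3 p (.neg (.neg (.neg p))))) (.mp (orMonoR dni) em)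

/-- from `a→b` infer `¬b→¬a`. -/
theorem contra (h : Der Φ (fImp p q)) : Der Φ (fImp (.neg q) (.neg p)) :=
  .mp (.ax (Ax.pl3 (.neg p) (.neg (.neg q)))) (.mp (orMonoR dni) h)

/-- `q → (p → q)`. -/
theorem a1 : Der Φ (fImp q (fImp p q)) :=
  hs (.ax (Ax.pl2 q (.neg p))) (.ax (Ax.pl3 q (.neg p)))

/-- permutation `(p→(q→r)) → (q→(p→r))`. -/
theorem permAx : Der Φ (fImp (fImp p (fImp q r)) (fImp q (fImp p r))) := by
  refine orElim (hs orInl (orInr (p := .neg q))) (orElim orInl (hs orInr (orInr (p := .neg q))))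

/-- contraction `(p→(p→r)) → (p→r)`. -/
theorem wAx : Der Φ (fImp (fImp p (fImp p r)) (fImp p r)) :=
  orElim orInl impSelf

/-- Frege `(p→(q→r)) → ((p→q)→(p→r))`. -/
theorem fregeAx : Der Φ (fImp (fImp p (fImp q r)) (fImp (fImp p q) (fImp p r))) :=
  hs (orMonoR hsAx) (hs permAx (orMonoR wAx))

/-- from `Der ¬p` infer `Der (p→χ)`. -/
theorem exfalso' (h : Der Φ (.neg p)) : Der Φ (fImp p χ) :=
  .mp (orInl (q := χ)) h

/-- from `Der p` infer `Der (¬p→χ)`. -/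
theorem negImpAny (h : Der Φ p) : Der Φ (fImp (.neg p) χ) :=
  .mp (orInl (q := χ)) (.mp dni h)

theorem fTopD : Der Φ fTop :=
  .mp orInl (.ax (Ax.eqRefl .zero))

theorem exfalso (h : Der Φ fBot) : Der Φ χ :=
  .mp (negImpAny fTopD) h

theorem bot_of_contradiction (h1 : Der Φ p) (h2 : Der Φ (.neg p)) : Der Φ fBot :=
  .mp (exfalso' h2) h1

theorem andIntro (h1 : Der Φ p) (h2 : Der Φ q) : Der Φ (fAnd p q) :=
  .mp (contra (orElim (exfalso' (.mp dni h1)) (exfalso' (.mp dni h2)))) (.mp dni fTopD)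

theorem andElimL (h : Der Φ (fAnd p q)) : Der Φ p :=
  .mp (hs (contra (orInl (q := .neg q))) dne) h

theorem andElimR (h : Der Φ (fAnd p q)) : Der Φ q :=
  .mp (hs (contra (orInr (p := .neg p))) dne) h

theorem iffElim1 (h : Der Φ (fIff p q)) (hp : Der Φ p) : Der Φ q :=
  .mp (andElimL h) hp

theorem iffElim2 (h : Der Φ (fIff p q)) (hq : Der Φ q) : Der Φ p :=
  .mp (andElimR h) hq

theorem caseSplit (h1 : Der Φ (fImp p χ)) (h2 : Der Φ (fImp (.neg p) χ)) : Der Φ χ :=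
  .mp (orElim h1 h2) em

end Der

/-- The deduction theorem. -/
theorem deduction {Φ : Set Fml} {ψ φ : Fml} (h : Der (insert ψ Φ) φ) :
    Der Φ (fImp ψ φ) := by
  induction h with
  | ax h1 => exact .mp Der.a1 (.ax h1)
  | hyp h1 =>
    rcases h1 with h1 | h1
    · exact h1 ▸ Der.impSelf
    · exact .mp Der.a1 (.hyp h1)
  | mp _ _ ih1 ih2 => exact .mp (.mp Der.fregeAx ih1) ih2

theorem neg_of_inconsistent {Φ : Set Fml} {ψ : Fml} (h : Der (insert ψ Φ) fBot) :
    Der Φ (.neg ψ) :=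
  .mp (Der.orElim Der.impSelf (Der.exfalso' (.mp Der.dni Der.fTopD))) (deduction h)

theorem pos_of_inconsistent {Φ : Set Fml} {ψ : Fml} (h : Der (insert (.neg ψ) Φ) fBot) :
    Der Φ ψ :=
  .mp Der.dne (neg_of_inconsistent h)



theorem der_finitary {Φ : Set Fml} {φ : Fml} (h : Der Φ φ) :
    ∃ Γ : Finset Fml, ↑Γ ⊆ Φ ∧ Der (↑Γ : Set Fml) φ := by
  classical
  induction h with
  | ax h1 => exact ⟨∅, by simp, .ax h1⟩
  | @hyp ψ h1 => exact ⟨{ψ}, by simpa using h1, .hyp (by simp)⟩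
  | mp _ _ ih1 ih2 =>
    obtain ⟨Γ1, hΓ1, hd1⟩ := ih1
    obtain ⟨Γ2, hΓ2, hd2⟩ := ih2
    exact ⟨Γ1 ∪ Γ2, by simp [Set.union_subset_iff, *],
      .mp (hd1.mono (by simp [Set.subset_def]; tauto)) (hd2.mono (by simp [Set.subset_def]; tauto))⟩

theorem finset_subset_chain_union {c : Set (Set Fml)} (hc : IsChain (· ⊆ ·) c)
    (hne : c.Nonempty) (Γ : Finset Fml) (hΓ : ↑Γ ⊆ ⋃₀ c) : ∃ Ψ ∈ c, ↑Γ ⊆ Ψ := by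
  classical
  induction Γ using Finset.induction_on with
  | empty => exact ⟨hne.choose, hne.choose_spec, by simp⟩
  | @insert a Γ ha ih =>
    obtain ⟨Ψ, hΨc, hΨ⟩ := ih (fun x hx => hΓ (by simp [hx]))
    obtain ⟨Θ, hΘc, haΘ⟩ := hΓ (show a ∈ (↑(insert a Γ) : Set Fml) by simp)
    rcases hc.total hΨc hΘc with h | h
    · exact ⟨Θ, hΘc, by
        intro x hx
        simp at hx
        rcases hx with rfl | hx
        · exact haΘ
        · exact h (hΨ hx)⟩
    · exact ⟨Ψ, hΨc, by
        intro x hx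
        simp at hx
        rcases hx with rfl | hx
        · exact h haΘ
        · exact hΨ hx⟩

/-- Lindenbaum: every consistent set extends to a maximal consistent set. -/
theorem lindenbaum {Φ₀ : Set Fml} (h : ¬ Der Φ₀ fBot) :
    ∃ T : Set Fml, Φ₀ ⊆ T ∧ ¬ Der T fBot ∧
      ∀ Ψ : Set Fml, ¬ Der Ψ fBot → T ⊆ Ψ → Ψ = T := by
  obtain ⟨T, hT⟩ := zorn_subset_nonempty {Ψ | ¬ Der Ψ fBot}
    (fun c hcS hchain hcne => by
      refine ⟨⋃₀ c, ?_, fun s hs => Set.subset_sUnion_of_mem hs⟩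
      intro hder
      obtain ⟨Γ, hΓ, hd⟩ := der_finitary hder
      obtain ⟨Ψ, hΨc, hΓΨ⟩ := finset_subset_chain_union hchain hcne Γ hΓ
      exact hcS hΨc (hd.mono hΓΨ)) Φ₀ h
  obtain ⟨hsub, hmax⟩ := hT
  exact ⟨T, hsub, hmax.prop, fun Ψ hΨ hTΨ => (hmax.le_of_ge hΨ hTΨ).antisymm hTΨ⟩

section MCS

variable {T : Set Fml} (hcon : ¬ Der T fBot)
  (hmax : ∀ Ψ : Set Fml, ¬ Der Ψ fBot → T ⊆ Ψ → Ψ = T)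

include hcon hmax

theorem mcs_mem_of_der {ψ : Fml} (h : Der T ψ) : ψ ∈ T := by
  by_contra hmem
  have : ¬ ¬ Der (insert ψ T) fBot := by
    intro hconψ
    have := hmax _ hconψ (Set.subset_insert _ _)
    exact hmem (this ▸ Set.mem_insert _ _)
  push_neg at this
  exact hcon (Der.bot_of_contradiction h (neg_of_inconsistent this))

theorem mcs_neg_mem {ψ : Fml} (h : ψ ∉ T) : (Fml.neg ψ) ∈ T := by
  have : ¬ ¬ Der (insert ψ T) fBot := by
    intro hconψ
    exact h ((hmax _ hconψ (Set.subset_insert _ _)) ▸ Set.mem_insert _ _)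
  push_neg at this
  exact mcs_mem_of_der hcon hmax (neg_of_inconsistent this)

theorem mcs_not_mem_of_neg {ψ : Fml} (h : (Fml.neg ψ) ∈ T) : ψ ∉ T := fun hψ =>
  hcon (Der.bot_of_contradiction (.hyp hψ) (.hyp h))

theorem mcs_neg_mem_iff {ψ : Fml} : (Fml.neg ψ) ∈ T ↔ ψ ∉ T :=
  ⟨mcs_not_mem_of_neg hcon hmax, mcs_neg_mem hcon hmax⟩

theorem mcs_mem_iff_der {ψ : Fml} : ψ ∈ T ↔ Der T ψ :=
  ⟨Der.hyp, mcs_mem_of_der hcon hmax⟩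

theorem mcs_or_mem_iff {p q : Fml} : (Fml.or p q) ∈ T ↔ p ∈ T ∨ q ∈ T := by
  constructor
  · intro h
    by_contra hc
    push_neg at hc
    have hnp := mcs_neg_mem hcon hmax hc.1
    have hnq := mcs_neg_mem hcon hmax hc.2
    exact hcon (Der.bot_of_contradiction (.hyp h)
      (mcs_mem_of_der hcon hmax
        (.mp (Der.contra (Der.orElim (Der.exfalso' (.hyp hnp)) Der.impSelf))
          (.hyp hnq)) |> Der.hyp))
  · rintro (h | h)
    · exact mcs_mem_of_der hcon hmax (.mp Der.orInl (.hyp h))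
    · exact mcs_mem_of_der hcon hmax (.mp Der.orInr (.hyp h))

end MCS



theorem ARepl.refl (a b : Act) : ∀ x : Act, ARepl a b x x := by
  intro x
  induction x with
  | basic n => exact .basic n
  | join x y ihx ihy => exact .join ihx ihy
  | meet x y ihx ihy => exact .meet ihx ihy
  | compl x ihx => exact .compl ihx
  | zero => exact .zero
  | one => exact .one

/-- Provable equality of actions. -/
def AEq (Φ : Set Fml) (x y : Act) : Prop := Der Φ (.eq x y)

namespace AEq

variable {Φ : Set Fml} {x y z w : Act}

theorem refl (x : Act) : AEq Φ x x := .ax (Ax.eqRefl x)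

theorem symm (h : AEq Φ x y) : AEq Φ y x := .mp (.ax (Ax.eqSymm x y)) h

theorem trans (h1 : AEq Φ x y) (h2 : AEq Φ y z) : AEq Φ x z :=
  .mp (.mp (.ax (Ax.eqTrans x y z)) h1) h2

theorem congrJoinL (h : AEq Φ x y) (z : Act) : AEq Φ (.join x z) (.join y z) :=
  .mp (.mp (.ax (Ax.subst (FRepl.eq (ARepl.refl x y _)
    (ARepl.join .repl (ARepl.refl x y z))))) h) (refl _)

theorem congrJoinR (h : AEq Φ z w) (x : Act) : AEq Φ (.join x z) (.join x w) :=
  .mp (.mp (.ax (Ax.subst (FRepl.eq (ARepl.refl z w _)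
    (ARepl.join (ARepl.refl z w x) .repl)))) h) (refl _)

theorem congrJoin (h1 : AEq Φ x y) (h2 : AEq Φ z w) :
    AEq Φ (.join x z) (.join y w) := (congrJoinL h1 z).trans (congrJoinR h2 y)

theorem congrMeetL (h : AEq Φ x y) (z : Act) : AEq Φ (.meet x z) (.meet y z) :=
  .mp (.mp (.ax (Ax.subst (FRepl.eq (ARepl.refl x y _)
    (ARepl.meet .repl (ARepl.refl x y z))))) h) (refl _)

theorem congrMeetR (h : AEq Φ z w) (x : Act) : AEq Φ (.meet x z) (.meet x w) :=
  .mp (.mp (.ax (Ax.subst (FRepl.eq (ARepl.refl z w _)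
    (ARepl.meet (ARepl.refl z w x) .repl)))) h) (refl _)

theorem congrMeet (h1 : AEq Φ x y) (h2 : AEq Φ z w) :
    AEq Φ (.meet x z) (.meet y w) := (congrMeetL h1 z).trans (congrMeetR h2 y)

theorem congrCompl (h : AEq Φ x y) : AEq Φ (.compl x) (.compl y) :=
  .mp (.mp (.ax (Ax.subst (FRepl.eq (ARepl.refl x y _)
    (ARepl.compl .repl)))) h) (refl _)

theorem joinComm : AEq Φ (.join x y) (.join y x) := .ax (Ax.joinComm x y)
theorem meetComm : AEq Φ (.meet x y) (.meet y x) := .ax (Ax.meetComm x y)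
theorem joinAssoc : AEq Φ (.join x (.join y z)) (.join (.join x y) z) :=
  .ax (Ax.joinAssoc x y z)
theorem meetAssoc : AEq Φ (.meet x (.meet y z)) (.meet (.meet x y) z) :=
  .ax (Ax.meetAssoc x y z)
theorem joinZero : AEq Φ (.join x .zero) x := .ax (Ax.joinZero x)
theorem meetOne : AEq Φ (.meet x .one) x := .ax (Ax.meetOne x)
theorem joinCompl : AEq Φ (.join x (.compl x)) .one := .ax (Ax.joinCompl x)
theorem meetCompl : AEq Φ (.meet x (.compl x)) .zero := .ax (Ax.meetCompl x)
theorem joinDistrib : AEq Φ (.join x (.meet y z)) (.meet (.join x y) (.join x z)) :=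
  .ax (Ax.joinDistrib x y z)
theorem meetDistrib : AEq Φ (.meet x (.join y z)) (.join (.meet x y) (.meet x z)) :=
  .ax (Ax.meetDistrib x y z)

theorem idemJoin : AEq Φ (.join x x) x :=
  (((joinZero.symm.trans (congrJoinR meetCompl.symm x)).trans joinDistrib).trans
    (congrMeetR joinCompl _)).trans meetOne |>.symm |>.symm
  |>.symm

theorem idemMeet : AEq Φ (.meet x x) x :=
  ((((meetOne.symm.trans (congrMeetR joinCompl.symm x)).trans meetDistrib).trans
    (congrJoinR meetCompl _)).trans joinZero).symm

theorem joinTop : AEq Φ (.join x .one) .one :=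
  (((congrJoinR joinCompl.symm x).trans joinAssoc).trans
    (congrJoinL idemJoin _)).trans joinCompl

theorem meetBot : AEq Φ (.meet x .zero) .zero :=
  (((congrMeetR meetCompl.symm x).trans meetAssoc).trans
    (congrMeetL idemMeet _)).trans meetCompl

theorem botJoin : AEq Φ (.join .zero x) x := joinComm.trans joinZero

theorem topJoin : AEq Φ (.join .one x) .one := joinComm.trans joinTop

theorem botMeet : AEq Φ (.meet .zero x) .zero := meetComm.trans meetBot

theorem absorb1 : AEq Φ (.join x (.meet x y)) x :=
  ((((congrJoinL meetOne.symm _).trans meetDistrib.symm).trans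
    (congrMeetR topJoin x)).trans meetOne)

theorem absorb2 : AEq Φ (.meet x (.join x y)) x :=
  ((((congrMeetL joinZero.symm _).trans joinDistrib.symm).trans
    (congrJoinR botMeet x)).trans joinZero)

end AEq



/-- The Lindenbaum–Tarski setoid on actions. -/
def actSetoid (Φ : Set Fml) : Setoid Act :=
  ⟨AEq Φ, fun x => AEq.refl x, fun h => h.symm, fun h1 h2 => h1.trans h2⟩

/-- The Lindenbaum–Tarski algebra of actions. -/
def LTA (Φ : Set Fml) : Type := Quotient (actSetoid Φ)

variable {Φ : Set Fml}

/-- Canonical map into the Lindenbaum–Tarski algebra. -/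
def mkA (Φ : Set Fml) (x : Act) : LTA Φ := Quotient.mk (actSetoid Φ) x

theorem mkA_eq {x y : Act} (h : AEq Φ x y) : mkA Φ x = mkA Φ y := Quot.sound h

theorem mkA_exact {x y : Act} (h : mkA Φ x = mkA Φ y) : AEq Φ x y :=
  @Quotient.exact _ (actSetoid Φ) _ _ h

theorem mkA_surj (a : LTA Φ) : ∃ x, a = mkA Φ x :=
  ⟨a.out, (Quotient.out_eq a).symm⟩

instance : Max (LTA Φ) :=
  ⟨Quotient.map₂ .join (fun _ _ h1 _ _ h2 => AEq.congrJoin h1 h2)⟩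
instance : Min (LTA Φ) :=
  ⟨Quotient.map₂ .meet (fun _ _ h1 _ _ h2 => AEq.congrMeet h1 h2)⟩
instance : Compl (LTA Φ) :=
  ⟨Quotient.map .compl (fun _ _ h => AEq.congrCompl h)⟩
instance : Top (LTA Φ) := ⟨mkA Φ .one⟩
instance : Bot (LTA Φ) := ⟨mkA Φ .zero⟩

theorem mkA_sup (x y : Act) : mkA Φ x ⊔ mkA Φ y = mkA Φ (.join x y) := rfl
theorem mkA_inf (x y : Act) : mkA Φ x ⊓ mkA Φ y = mkA Φ (.meet x y) := rfl
theorem mkA_compl (x : Act) : (mkA Φ x)ᶜ = mkA Φ (.compl x) := rfl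

instance : Lattice (LTA Φ) :=
  Lattice.mk'
    (fun a b => Quotient.inductionOn₂ a b fun x y => mkA_eq AEq.joinComm)
    (fun a b c => Quotient.inductionOn₃ a b c fun x y z => mkA_eq AEq.joinAssoc.symm)
    (fun a b => Quotient.inductionOn₂ a b fun x y => mkA_eq AEq.meetComm)
    (fun a b c => Quotient.inductionOn₃ a b c fun x y z => mkA_eq AEq.meetAssoc.symm)
    (fun a b => Quotient.inductionOn₂ a b fun x y => mkA_eq AEq.absorb1)
    (fun a b => Quotient.inductionOn₂ a b fun x y => mkA_eq AEq.absorb2)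

instance : DistribLattice (LTA Φ) :=
  { (inferInstance : Lattice (LTA Φ)) with
    le_sup_inf := fun a b c => Quotient.inductionOn₃ a b c fun x y z =>
      le_of_eq (mkA_eq AEq.joinDistrib.symm) }

instance : BooleanAlgebra (LTA Φ) :=
  { (inferInstance : DistribLattice (LTA Φ)) with
    compl := compl
    top := ⊤
    bot := ⊥
    inf_compl_le_bot := fun a => Quotient.inductionOn a fun x =>
      le_of_eq (mkA_eq AEq.meetCompl)
    top_le_sup_compl := fun a => Quotient.inductionOn a fun x =>
      ge_of_eq (mkA_eq AEq.joinCompl)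
    le_top := fun a => Quotient.inductionOn a fun x =>
      (le_sup_left (a := mkA Φ x) (b := (⊤ : LTA Φ))).trans
        (le_of_eq (mkA_eq (AEq.joinTop (x := x))))
    bot_le := fun a => Quotient.inductionOn a fun x =>
      (le_of_eq (mkA_eq (AEq.botMeet (x := x))).symm).trans
        (inf_le_right (a := (⊥ : LTA Φ)) (b := mkA Φ x)) }



theorem perm_congr {Φ : Set Fml} {x y : Act} (h : AEq Φ x y)
    (hp : Der Φ (.perm x)) : Der Φ (.perm y) :=
  .mp (.mp (.ax (Ax.subst (FRepl.perm ARepl.repl))) h) hp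

theorem forb_congr {Φ : Set Fml} {x y : Act} (h : AEq Φ x y)
    (hp : Der Φ (.forb x)) : Der Φ (.forb y) :=
  .mp (.mp (.ax (Ax.subst (FRepl.forb ARepl.repl))) h) hp

/-- The canonical "permitted" ideal. -/
def permIdeal (Φ : Set Fml) : Set (LTA Φ) := {a | ∃ x, a = mkA Φ x ∧ Der Φ (.perm x)}

/-- The canonical "forbidden" ideal. -/
def forbIdeal (Φ : Set Fml) : Set (LTA Φ) := {a | ∃ x, a = mkA Φ x ∧ Der Φ (.forb x)}

theorem mem_permIdeal {Φ : Set Fml} {x : Act} :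
    mkA Φ x ∈ permIdeal Φ ↔ Der Φ (.perm x) := by
  constructor
  · rintro ⟨y, he, hy⟩
    exact perm_congr (mkA_exact he).symm hy
  · exact fun h => ⟨x, rfl, h⟩

theorem mem_forbIdeal {Φ : Set Fml} {x : Act} :
    mkA Φ x ∈ forbIdeal Φ ↔ Der Φ (.forb x) := by
  constructor
  · rintro ⟨y, he, hy⟩
    exact forb_congr (mkA_exact he).symm hy
  · exact fun h => ⟨x, rfl, h⟩

theorem permIdeal_isIdeal (Φ : Set Fml) : IsIdeal (permIdeal Φ) := by
  constructor
  · rintro a ⟨u, rfl, hu⟩ b ⟨v, rfl, hv⟩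
    erw [mkA_sup]
    exact mem_permIdeal.2 (Der.iffElim2 (.ax (Ax.d1 u v)) (Der.andIntro hu hv))
  · rintro a ⟨u, rfl, hu⟩ c
    obtain ⟨z, rfl⟩ := mkA_surj c
    erw [mkA_inf]
    refine mem_permIdeal.2 (Der.andElimR (Der.iffElim1 (.ax (Ax.d1 u (.meet u z))) ?_))
    exact perm_congr (AEq.absorb1 (y := z)).symm hu

theorem forbIdeal_isIdeal (Φ : Set Fml) : IsIdeal (forbIdeal Φ) := by
  constructor
  · rintro a ⟨u, rfl, hu⟩ b ⟨v, rfl, hv⟩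
    erw [mkA_sup]
    exact mem_forbIdeal.2 (Der.iffElim2 (.ax (Ax.d2 u v)) (Der.andIntro hu hv))
  · rintro a ⟨u, rfl, hu⟩ c
    obtain ⟨z, rfl⟩ := mkA_surj c
    erw [mkA_inf]
    refine mem_forbIdeal.2 (Der.andElimR (Der.iffElim1 (.ax (Ax.d2 u (.meet u z))) ?_))
    exact forb_congr (AEq.absorb1 (y := z)).symm hu

theorem permIdeal_inter_forbIdeal (Φ : Set Fml) :
    permIdeal Φ ∩ forbIdeal Φ = {⊥} := by
  ext a
  constructor
  · rintro ⟨⟨u, rfl, hu⟩, hf⟩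
    have hfu : Der Φ (.forb u) := mem_forbIdeal.1 hf
    have : AEq Φ u .zero := Der.iffElim2 (.ax (Ax.d3 u)) (Der.andIntro hu hfu)
    exact Set.mem_singleton_iff.2 (mkA_eq this)
  · rintro rfl
    have h0 : Der Φ (fAnd (.perm .zero) (.forb .zero)) :=
      Der.iffElim1 (.ax (Ax.d3 .zero)) (.ax (Ax.eqRefl .zero))
    exact ⟨⟨.zero, rfl, Der.andElimL h0⟩, ⟨.zero, rfl, Der.andElimR h0⟩⟩

theorem lta_nontrivial {T : Set Fml} (hcon : ¬ Der T fBot) : Nontrivial (LTA T) :=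
  ⟨⟨⊥, ⊤, fun h => hcon (Der.bot_of_contradiction (mkA_exact h) (.ax Ax.nondeg))⟩⟩

theorem eval_mkA (Φ : Set Fml) (a : Act) :
    evalAct (fun n => mkA Φ (.basic n)) a = mkA Φ a := by
  induction a with
  | basic n => rfl
  | join x y ihx ihy => show _ ⊔ _ = _; rw [ihx, ihy]; rfl
  | meet x y ihx ihy => show _ ⊓ _ = _; rw [ihx, ihy]; rfl
  | compl x ihx => show _ᶜ = _; rw [ihx]; rfl
  | zero => rfl
  | one => rfl

theorem truth_lemma {T : Set Fml} (hcon : ¬ Der T fBot)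
    (hmax : ∀ Ψ : Set Fml, ¬ Der Ψ fBot → T ⊆ Ψ → Ψ = T) (ψ : Fml) :
    Sat (permIdeal T) (forbIdeal T) (fun n => mkA T (.basic n)) ψ ↔ ψ ∈ T := by
  induction ψ with
  | neg p ih =>
    show ¬ Sat _ _ _ p ↔ _
    rw [ih, ← mcs_neg_mem_iff hcon hmax]
  | or p q ihp ihq =>
    show Sat _ _ _ p ∨ Sat _ _ _ q ↔ _
    rw [ihp, ihq, mcs_or_mem_iff hcon hmax]
  | eq a b =>
    show evalAct _ a = evalAct _ b ↔ _
    rw [eval_mkA, eval_mkA, mcs_mem_iff_der hcon hmax]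
    exact ⟨mkA_exact, mkA_eq⟩
  | perm a =>
    show evalAct _ a ∈ permIdeal T ↔ _
    rw [eval_mkA, mem_permIdeal, mcs_mem_iff_der hcon hmax]
  | forb a =>
    show evalAct _ a ∈ forbIdeal T ↔ _
    rw [eval_mkA, mem_forbIdeal, mcs_mem_iff_der hcon hmax]


end DAL

/-- Completeness of DAL (Segerberg): if φ is an algebraic
consequence of Φ, then Φ ⊢ φ in the Hilbert system for DAL. -/
theorem DAL.completeness (Φ : Set DAL.Fml) (φ : DAL.Fml) :
    DAL.ACons Φ φ → DAL.Prov Φ φ := by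
  intro h
  rw [DAL.prov_iff_der]
  by_contra hprov
  have hcon0 : ¬ DAL.Der (insert (DAL.Fml.neg φ) Φ) DAL.fBot :=
    fun hb => hprov (DAL.pos_of_inconsistent hb)
  obtain ⟨T, hsub, hcon, hmax⟩ := DAL.lindenbaum hcon0
  haveI : Nontrivial (DAL.LTA T) := DAL.lta_nontrivial hcon
  have hsat := h (DAL.LTA T) (DAL.permIdeal T) (DAL.forbIdeal T)
    (fun n => DAL.mkA T (.basic n)) (DAL.permIdeal_isIdeal T) (DAL.forbIdeal_isIdeal T)
    (DAL.permIdeal_inter_forbIdeal T)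
    (fun ψ hψ => (DAL.truth_lemma hcon hmax ψ).2 (hsub (Set.mem_insert_of_mem _ hψ)))
  have hφT : φ ∈ T := (DAL.truth_lemma hcon hmax φ).1 hsat
  have hnφT : DAL.Fml.neg φ ∈ T := hsub (Set.mem_insert _ _)
  exact hcon (DAL.Der.bot_of_contradiction (.hyp hφT) (.hyp hnφT))
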